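/- Let T ∈ ℕ and consider a deterministic array (p_t, c_t)_{t=0}^{T} with p_t ∈ ℝ^L_{++} and c_t ∈ ℝ^L_+ \ {0}. The array is R-rationalizable if and only if there exist a concave, locally nonsatiated, continuous utility function u : ℝ^L_+ → ℝ and, for each t ∈ {0,…,T}, a scalar λ_t > 0 and a supergradient ξ_t ∈ ∂u(c_t) such that ξ_{t,j} ≤ λ_t p_{t,j} for every coordinate j = 1,…,L, with equality ξ_{t,j} = λ_t p_{t,j} whenever c_{t,j} ≠ 0. -/

import Mathlib

open MeasureTheory Filter Topology Finset

noncomputable section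

/-- Vectors in ℝ^L with the Euclidean norm. -/
abbrev Vec (L : ℕ) := EuclideanSpace ℝ (Fin L)

/-- Inner product (dot product) of two vectors. -/
def dotp {L : ℕ} (p c : Vec L) : ℝ := ∑ j, p j * c j

/-- Componentwise nonnegative vectors: the set ℝ^L_+. -/
def NonnegV {L : ℕ} (c : Vec L) : Prop := ∀ j, 0 ≤ c j

/-- The consumption space ℝ^L_+ \ {0}. -/
def ConsV {L : ℕ} (c : Vec L) : Prop := NonnegV c ∧ c ≠ 0

/-- Componentwise strictly positive vectors: the set ℝ^L_{++}. -/
def PosV {L : ℕ} (p : Vec L) : Prop := ∀ j, 0 < p j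

/-- Concavity of u on its domain ℝ^L_+. -/
def IsConcaveNN {L : ℕ} (u : Vec L → ℝ) : Prop :=
  ∀ c c' : Vec L, NonnegV c → NonnegV c' → ∀ a : ℝ, 0 ≤ a → a ≤ 1 →
    a * u c + (1 - a) * u c' ≤ u (a • c + (1 - a) • c')

/-- Local nonsatiation of u on its domain ℝ^L_+. -/
def LocallyNonsatiatedNN {L : ℕ} (u : Vec L → ℝ) : Prop :=
  ∀ c : Vec L, NonnegV c → ∀ ε : ℝ, 0 < ε →
    ∃ c' : Vec L, NonnegV c' ∧ ‖c' - c‖ < ε ∧ u c < u c'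

/-- Continuity of u on its domain ℝ^L_+. -/
def ContinuousNN {L : ℕ} (u : Vec L → ℝ) : Prop := ContinuousOn u {c | NonnegV c}

/-- A concave, locally nonsatiated, continuous utility function on ℝ^L_+. -/
def NiceUtility {L : ℕ} (u : Vec L → ℝ) : Prop :=
  IsConcaveNN u ∧ LocallyNonsatiatedNN u ∧ ContinuousNN u

/-- ξ is a supergradient of u at c: u(c') − u(c) ≤ ξᵀ(c'−c) for all c' ∈ ℝ^L_+ \ {0}. -/
def Supergrad {L : ℕ} (u : Vec L → ℝ) (c ξ : Vec L) : Prop :=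
  ∀ c' : Vec L, ConsV c' → u c' - u c ≤ dotp ξ (c' - c)

/-- R-rationalizability: there exist a nice utility u and income levels y_t > 0 such that
each c_t maximizes u over {c ∈ ℝ^L_+ : p_tᵀ c = y_t}. -/
def RRat {L T : ℕ} (p c : Fin (T + 1) → Vec L) : Prop :=
  ∃ u : Vec L → ℝ, ∃ y : Fin (T + 1) → ℝ,
    NiceUtility u ∧ (∀ t, 0 < y t) ∧
    ∀ t, dotp (p t) (c t) = y t ∧
      ∀ z : Vec L, NonnegV z → dotp (p t) z = y t → u z ≤ u (c t)

/-- Linearity of dotp in the second argument under scalar multiplication. -/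
lemma dotp_smul_right {L : ℕ} (p : Vec L) (a : ℝ) (w : Vec L) :
    dotp p (a • w) = a * dotp p w := by
  simp only [dotp, Finset.mul_sum, PiLp.smul_apply, smul_eq_mul]
  exact Finset.sum_congr rfl fun j _ => by ring

lemma dotp_add_right {L : ℕ} (p : Vec L) (w w' : Vec L) :
    dotp p (w + w') = dotp p w + dotp p w' := by
  simp only [dotp, PiLp.add_apply, ← Finset.sum_add_distrib]
  exact Finset.sum_congr rfl fun j _ => by ring

lemma dotp_continuous {L : ℕ} (p : Vec L) : Continuous (fun z : Vec L => dotp p z) := by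
  unfold dotp
  exact continuous_finset_sum _ fun j _ => continuous_const.mul (PiLp.continuous_apply 2 _ j)

/-- Budget-ball compactness. -/
lemma budget_compact {L : ℕ} (p : Vec L) (hp : PosV p) (r : ℝ) :
    IsCompact {z : Vec L | NonnegV z ∧ dotp p z ≤ r} := by
  have h1 : IsClosed {z : Vec L | NonnegV z} := by
    have : {z : Vec L | NonnegV z} = ⋂ j, {z : Vec L | 0 ≤ z j} := by
      ext z; simp [NonnegV, Set.mem_iInter]
    rw [this]
    exact isClosed_iInter fun j => isClosed_le continuous_const (PiLp.continuous_apply 2 _ j)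
  have h2 : IsClosed {z : Vec L | dotp p z ≤ r} := isClosed_le (dotp_continuous p) continuous_const
  have hsub : {z : Vec L | NonnegV z ∧ dotp p z ≤ r} ⊆
      Metric.closedBall 0 (Real.sqrt (∑ j, (r / p j) ^ 2)) := by
    intro z hz
    rw [Metric.mem_closedBall, dist_zero_right, EuclideanSpace.norm_eq]
    apply Real.sqrt_le_sqrt
    apply Finset.sum_le_sum
    intro j _
    have hle : p j * z j ≤ r :=
      le_trans (Finset.single_le_sum (f := fun i => p i * z i)
        (fun i _ => mul_nonneg (hp i).le (hz.1 i)) (Finset.mem_univ j)) hz.2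
    have h2 : z j ≤ r / p j := (le_div_iff₀ (hp j)).mpr (by linarith [mul_comm (p j) (z j)])
    have : ‖z j‖ ^ 2 = z j ^ 2 := by rw [Real.norm_eq_abs, sq_abs]
    rw [this]
    exact pow_le_pow_left₀ (hz.1 j) h2 2
  exact Metric.isCompact_of_isClosed_isBounded (h1.inter h2)
    (Metric.isBounded_closedBall.subset hsub)

/-- Key lemma: from maximization on an equality budget set, extract a positive
marginal utility of income λ giving a linear upper bound. -/
lemma key_lemma {L : ℕ} (u : Vec L → ℝ) (hu : NiceUtility u)
    (p c₀ : Vec L) (hp : PosV p) (hc₀ : NonnegV c₀) (y : ℝ) (hy : 0 < y)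
    (hbud : dotp p c₀ = y)
    (hmax : ∀ z : Vec L, NonnegV z → dotp p z = y → u z ≤ u c₀) :
    ∃ lam : ℝ, 0 < lam ∧ ∀ z : Vec L, ConsV z → u z - u c₀ ≤ lam * (dotp p z - y) := by
  obtain ⟨hconc, hlns, hcont⟩ := hu
  set B : ℝ → Set (Vec L) := fun m => {z : Vec L | NonnegV z ∧ dotp p z = m} with hB
  set f : ℝ → ℝ := fun m => sSup (u '' B m) with hf
  -- attainment of the max on each budget set
  have hattain : ∀ m : ℝ, 0 < m → ∃ z, z ∈ B m ∧ u z = f m ∧ ∀ w ∈ B m, u w ≤ u z := by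
    intro m hm
    have hne : (B m).Nonempty := by
      refine ⟨(m / y) • c₀, fun j => ?_, ?_⟩
      · simp only [PiLp.smul_apply, smul_eq_mul]
        exact mul_nonneg (div_nonneg hm.le hy.le) (hc₀ j)
      · rw [dotp_smul_right, hbud, div_mul_cancel₀ _ hy.ne']
    have hclosed : IsClosed (B m) := by
      have h1 : IsClosed {z : Vec L | NonnegV z} := by
        have : {z : Vec L | NonnegV z} = ⋂ j, {z : Vec L | 0 ≤ z j} := by
          ext z; simp [NonnegV, Set.mem_iInter]
        rw [this]
        exact isClosed_iInter fun j => isClosed_le continuous_const (PiLp.continuous_apply 2 _ j)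
      exact h1.inter (isClosed_eq (dotp_continuous p) continuous_const)
    have hcpt : IsCompact (B m) :=
      (budget_compact p hp m).of_isClosed_subset hclosed (fun z hz => ⟨hz.1, hz.2.le⟩)
    obtain ⟨z, hzB, hzmax⟩ := hcpt.exists_isMaxOn hne (hcont.mono (fun w hw => hw.1))
    refine ⟨z, hzB, ?_, fun w hw => hzmax hw⟩
    have : IsGreatest (u '' B m) (u z) :=
      ⟨Set.mem_image_of_mem u hzB, by rintro _ ⟨w, hw, rfl⟩; exact hzmax hw⟩
    exact (this.csSup_eq).symm
  have hle : ∀ m : ℝ, 0 < m → ∀ w, NonnegV w → dotp p w = m → u w ≤ f m := by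
    intro m hm w hw hwm
    obtain ⟨z, _, hzf, hzmax⟩ := hattain m hm
    exact le_trans (hzmax w ⟨hw, hwm⟩) hzf.le
  have hfy : f y = u c₀ := by
    obtain ⟨z, hzB, hzf, hzmax⟩ := hattain y hy
    have h1 : u z ≤ u c₀ := hmax z hzB.1 hzB.2
    have h2 : u c₀ ≤ u z := hzmax c₀ ⟨hc₀, hbud⟩
    rw [← hzf]; exact le_antisymm h1 h2
  -- concavity of f on positives
  have hconcf : ∀ a b μ : ℝ, 0 < a → 0 < b → 0 ≤ μ → μ ≤ 1 →
      μ * f a + (1 - μ) * f b ≤ f (μ * a + (1 - μ) * b) := by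
    intro a b μ ha hb hμ0 hμ1
    obtain ⟨za, hzaB, hzaf, _⟩ := hattain a ha
    obtain ⟨zb, hzbB, hzbf, _⟩ := hattain b hb
    have hcomb_pos : 0 < μ * a + (1 - μ) * b := by
      rcases eq_or_lt_of_le hμ1 with he | hlt
      · subst he; simpa using ha
      · have : 0 < (1 - μ) * b := mul_pos (by linarith) hb
        nlinarith [mul_nonneg hμ0 ha.le]
    have hzc : NonnegV (μ • za + (1 - μ) • zb) := by
      intro j
      simp only [PiLp.add_apply, PiLp.smul_apply, smul_eq_mul]
      have := hzaB.1 j; have := hzbB.1 j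
      nlinarith
    have hzcdot : dotp p (μ • za + (1 - μ) • zb) = μ * a + (1 - μ) * b := by
      rw [dotp_add_right, dotp_smul_right, dotp_smul_right, hzaB.2, hzbB.2]
    calc μ * f a + (1 - μ) * f b = μ * u za + (1 - μ) * u zb := by rw [hzaf, hzbf]
      _ ≤ u (μ • za + (1 - μ) • zb) := hconc za zb hzaB.1 hzbB.1 μ hμ0 hμ1
      _ ≤ f (μ * a + (1 - μ) * b) := hle _ hcomb_pos _ hzc hzcdot
  -- three point inequality
  have hthree : ∀ a b d : ℝ, 0 < a → a < b → b < d →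
      (d - b) * f a + (b - a) * f d ≤ (d - a) * f b := by
    intro a b d ha hab hbd
    have hda : (0:ℝ) < d - a := by linarith
    have hμ0 : 0 ≤ (d - b) / (d - a) := div_nonneg (by linarith) hda.le
    have hμ1 : (d - b) / (d - a) ≤ 1 := by rw [div_le_one hda]; linarith
    have hcomb : (d - b) / (d - a) * a + (1 - (d - b) / (d - a)) * d = b := by
      field_simp; ring
    have H := hconcf a d ((d - b) / (d - a)) ha (by linarith) hμ0 hμ1
    rw [hcomb] at H
    have H2 := mul_le_mul_of_nonneg_left H hda.le
    have key2 : (d - a) * ((d - b) / (d - a) * f a + (1 - (d - b) / (d - a)) * f d)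
        = (d - b) * f a + (b - a) * f d := by field_simp; ring
    rw [key2] at H2
    linarith
  -- there exists m1 > y with f y < f m1
  have hm1 : ∃ m1 : ℝ, y < m1 ∧ f y < f m1 := by
    by_contra h
    push_neg at h
    have hcpt := budget_compact p hp (y + 1)
    have hKne : ({z : Vec L | NonnegV z ∧ dotp p z ≤ y + 1}).Nonempty :=
      ⟨c₀, hc₀, by rw [hbud]; linarith⟩
    obtain ⟨zs, hzsK, hzsmax⟩ := hcpt.exists_isMaxOn hKne (hcont.mono (fun w hw => hw.1))
    have hglob : ∀ w : Vec L, NonnegV w → u w ≤ u zs := by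
      intro w hw
      by_cases hwle : dotp p w ≤ y + 1
      · exact hzsmax ⟨hw, hwle⟩
      · push_neg at hwle
        have hm : (0:ℝ) < dotp p w := by linarith
        have h1 : u w ≤ f (dotp p w) := hle _ hm w hw rfl
        have h2 : f (dotp p w) ≤ f y := h _ (by linarith)
        have h3 : u c₀ ≤ u zs := hzsmax ⟨hc₀, by rw [hbud]; linarith⟩
        rw [hfy] at h2
        linarith
    obtain ⟨w, hw, _, hwu⟩ := hlns zs hzsK.1 1 one_pos
    exact absurd (hglob w hw) (not_le.mpr hwu)
  obtain ⟨m1, hm1y, hm1f⟩ := hm1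
  -- set of right chord slopes
  set S : Set ℝ := (fun m => (f m - f y) / (m - y)) '' Set.Ioi y with hS
  have hSne : S.Nonempty := ⟨_, ⟨m1, hm1y, rfl⟩⟩
  have hbddS : BddAbove S := by
    refine ⟨(f y - f (y / 2)) / (y - y / 2), ?_⟩
    rintro _ ⟨m, hm, rfl⟩
    rw [Set.mem_Ioi] at hm
    have h3 := hthree (y / 2) y m (by linarith) (by linarith) hm
    rw [div_le_div_iff₀ (by linarith) (by linarith)]
    nlinarith
  set lam : ℝ := sSup S with hlam
  have hlam_pos : 0 < lam := by
    have h1 : (f m1 - f y) / (m1 - y) ≤ lam := le_csSup hbddS ⟨m1, hm1y, rfl⟩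
    have h2 : 0 < (f m1 - f y) / (m1 - y) := div_pos (by linarith) (by linarith)
    linarith
  refine ⟨lam, hlam_pos, ?_⟩
  intro z hz
  have hzne : ∃ j, z j ≠ 0 := by
    by_contra hj
    push_neg at hj
    exact hz.2 (by ext j; simpa using hj j)
  obtain ⟨j0, hj0⟩ := hzne
  have hm : 0 < dotp p z := by
    apply Finset.sum_pos' (fun i _ => mul_nonneg (hp i).le (hz.1 i))
    exact ⟨j0, Finset.mem_univ j0, mul_pos (hp j0) ((hz.1 j0).lt_of_ne' hj0)⟩
  have huzf : u z ≤ f (dotp p z) := hle _ hm z hz.1 rfl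
  have hfbound : f (dotp p z) - f y ≤ lam * (dotp p z - y) := by
    rcases lt_trichotomy (dotp p z) y with hlt | heq | hgt
    · -- dotp p z < y
      have hub : ∀ s ∈ S, s ≤ (f y - f (dotp p z)) / (y - dotp p z) := by
        rintro _ ⟨m, hmIoi, rfl⟩
        rw [Set.mem_Ioi] at hmIoi
        have h3 := hthree (dotp p z) y m hm hlt hmIoi
        rw [div_le_div_iff₀ (by linarith) (by linarith)]
        nlinarith
      have hlamle : lam ≤ (f y - f (dotp p z)) / (y - dotp p z) := csSup_le hSne hub
      rw [le_div_iff₀ (by linarith)] at hlamle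
      nlinarith
    · rw [heq]; simp
    · have hmem : (f (dotp p z) - f y) / (dotp p z - y) ≤ lam :=
        le_csSup hbddS ⟨dotp p z, hgt, rfl⟩
      rw [div_le_iff₀ (by linarith)] at hmem
      linarith
  rw [hfy] at hfbound
  linarith

theorem stmt_0 {L T : ℕ} (p c : Fin (T + 1) → Vec L)
    (hp : ∀ t, PosV (p t)) (hc : ∀ t, ConsV (c t)) :
    RRat p c ↔
      ∃ u : Vec L → ℝ, NiceUtility u ∧
        ∀ t, ∃ lam : ℝ, 0 < lam ∧ ∃ ξ : Vec L, Supergrad u (c t) ξ ∧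
          (∀ j, ξ j ≤ lam * p t j) ∧ (∀ j, c t j ≠ 0 → ξ j = lam * p t j) := by
  constructor
  · rintro ⟨u, y, hu, hy, hopt⟩
    refine ⟨u, hu, fun t => ?_⟩
    obtain ⟨lam, hlam, hsg⟩ := key_lemma u hu (p t) (c t) (hp t) (hc t).1 (y t) (hy t)
      (hopt t).1 (hopt t).2
    refine ⟨lam, hlam, lam • p t, ?_, fun j => le_of_eq ?_, fun j _ => ?_⟩
    · intro z hz
      have hdot : dotp (lam • p t) (z - c t) = lam * (dotp (p t) z - y t) := by
        rw [← (hopt t).1]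
        simp only [dotp, PiLp.smul_apply, PiLp.sub_apply, smul_eq_mul,
          ← Finset.sum_sub_distrib, Finset.mul_sum]
        exact Finset.sum_congr rfl fun j _ => by ring
      rw [hdot]
      exact hsg z hz
    · simp [PiLp.smul_apply, smul_eq_mul]
    · simp [PiLp.smul_apply, smul_eq_mul]
  · rintro ⟨u, hu, h⟩
    refine ⟨u, fun t => dotp (p t) (c t), hu, fun t => ?_, fun t => ⟨rfl, ?_⟩⟩
    · obtain ⟨j0, hj0⟩ : ∃ j, c t j ≠ 0 := by
        by_contra hj
        push_neg at hj
        exact (hc t).2 (by ext j; simpa using hj j)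
      apply Finset.sum_pos' (fun i _ => mul_nonneg (hp t i).le ((hc t).1 i))
      exact ⟨j0, Finset.mem_univ j0, mul_pos (hp t j0) (((hc t).1 j0).lt_of_ne' hj0)⟩
    · intro z hz hzy
      have hzy' : dotp (p t) z = dotp (p t) (c t) := hzy
      obtain ⟨lam, hlam, ξ, hξsg, hξle, hξeq⟩ := h t
      have hz0 : z ≠ 0 := by
        intro h0
        rw [h0] at hzy'
        have hd0 : dotp (p t) (0 : Vec L) = 0 := by
          simp [dotp]
        rw [hd0] at hzy'
        obtain ⟨j0, hj0⟩ : ∃ j, c t j ≠ 0 := by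
          by_contra hj
          push_neg at hj
          exact (hc t).2 (by ext j; simpa using hj j)
        have hpos : 0 < dotp (p t) (c t) := by
          apply Finset.sum_pos' (fun i _ => mul_nonneg (hp t i).le ((hc t).1 i))
          exact ⟨j0, Finset.mem_univ j0, mul_pos (hp t j0) (((hc t).1 j0).lt_of_ne' hj0)⟩
        rw [← hzy'] at hpos
        exact lt_irrefl 0 hpos
      have hsg := hξsg z ⟨hz, hz0⟩
      have hA : dotp ξ (z - c t) ≤ 0 := by
        have hexp : dotp ξ (z - c t) = (∑ j, ξ j * z j) - (∑ j, ξ j * c t j) := by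
          simp only [dotp, PiLp.sub_apply, ← Finset.sum_sub_distrib]
          exact Finset.sum_congr rfl fun j _ => by ring
        have h1 : (∑ j, ξ j * z j) ≤ ∑ j, lam * p t j * z j :=
          Finset.sum_le_sum fun j _ => mul_le_mul_of_nonneg_right (hξle j) (hz j)
        have h2 : (∑ j, ξ j * c t j) = ∑ j, lam * p t j * c t j := by
          apply Finset.sum_congr rfl
          intro j _
          by_cases hcj : c t j = 0
          · rw [hcj]; ring
          · rw [hξeq j hcj]
        have h3 : (∑ j, lam * p t j * z j) = lam * dotp (p t) z := by
          rw [dotp, Finset.mul_sum]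
          exact Finset.sum_congr rfl fun j _ => by ring
        have h4 : (∑ j, lam * p t j * c t j) = lam * dotp (p t) (c t) := by
          rw [dotp, Finset.mul_sum]
          exact Finset.sum_congr rfl fun j _ => by ring
        rw [hexp, h2]
        rw [h3] at h1
        calc (∑ j, ξ j * z j) - (∑ j, lam * p t j * c t j)
            ≤ lam * dotp (p t) z - lam * dotp (p t) (c t) := by rw [h4]; linarith
          _ = 0 := by rw [hzy']; ring
      linarith

end
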